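/- For every skew-symmetric matrix A ∈ Mₙ(ℤ) (i.e., Aᵀ = −A), the determinant det(A) is a perfect square in ℤ; in particular det(A) ≡ 0 or 1 (mod 4). -/

import Mathlib

open Matrix

theorem key_rat : ∀ n, ∀ A : Matrix (Fin n) (Fin n) ℚ, Aᵀ = -A → ∃ r : ℚ, A.det = r ^ 2 := by
  intro n
  induction n using Nat.strong_induction_on with
  | _ n ih =>
  intro A hA
  have hskew : ∀ i k, A k i = - A i k := by
    intro i k
    have := congrFun (congrFun hA i) k
    simpa [Matrix.transpose_apply] using this
  have hdiag : ∀ i, A i i = 0 := by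
    intro i; have := hskew i i; linarith
  match n, A, hA, hskew, hdiag, ih with
  | 0, A, hA, hskew, hdiag, ih => exact ⟨1, by simp [Matrix.det_fin_zero]⟩
  | 1, A, hA, hskew, hdiag, ih => exact ⟨0, by simp [Matrix.det_fin_one, hdiag 0]⟩
  | (m+2), A, hA, hskew, hdiag, ih =>
    by_cases h0 : ∀ j, A 0 j = 0
    · exact ⟨0, by rw [Matrix.det_eq_zero_of_row_eq_zero 0 h0]; ring⟩
    push_neg at h0
    obtain ⟨j, hj⟩ := h0
    have hj0 : j ≠ 0 := by rintro rfl; exact hj (hdiag 0)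
    set σ : Equiv.Perm (Fin (m+2)) := Equiv.swap 1 j with hσ
    have hσ0 : σ 0 = 0 := Equiv.swap_apply_of_ne_of_ne (by simp) (Ne.symm hj0)
    have hσ1 : σ 1 = j := Equiv.swap_apply_left 1 j
    set e : Fin 2 ⊕ Fin m ≃ Fin (m+2) :=
      (finSumFinEquiv.trans (finCongr (by omega))) with he
    have he0 : e (Sum.inl 0) = 0 := by apply Fin.ext; simp [he]
    have he1 : e (Sum.inl 1) = 1 := by apply Fin.ext; simp [he]
    set τ : Fin 2 ⊕ Fin m ≃ Fin (m+2) := e.trans σ with hτ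
    set M : Matrix (Fin 2 ⊕ Fin m) (Fin 2 ⊕ Fin m) ℚ := A.submatrix τ τ with hM
    have hMskew : ∀ i k, M k i = - M i k := fun i k => hskew _ _
    have hdetM : M.det = A.det := Matrix.det_submatrix_equiv_self τ A
    set c : ℚ := A 0 j with hc
    set B11 := M.toBlocks₁₁ with hB11
    set B12 := M.toBlocks₁₂ with hB12
    set B21 := M.toBlocks₂₁ with hB21
    set B22 := M.toBlocks₂₂ with hB22
    have hB11eq : B11 = !![0, c; -c, 0] := by
      ext i k
      fin_cases i <;> fin_cases k <;>
        simp [hB11, Matrix.toBlocks₁₁, hM, hτ, he0, he1, hσ0, hσ1, hdiag, hskew 0 j] <;> rfl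
    have hN : B11 * !![0, -c⁻¹; c⁻¹, 0] = 1 ∧ !![0, -c⁻¹; c⁻¹, 0] * B11 = 1 := by
      rw [hB11eq]
      constructor <;> (ext i k; fin_cases i <;> fin_cases k <;>
        simp [Matrix.mul_apply, Fin.sum_univ_two, hj, Matrix.one_apply])
    haveI : Invertible B11 := ⟨!![0, -c⁻¹; c⁻¹, 0], hN.2, hN.1⟩
    have hinv : ⅟B11 = !![0, -c⁻¹; c⁻¹, 0] := invOf_eq_right_inv hN.1
    have hMblocks : M = Matrix.fromBlocks B11 B12 B21 B22 :=
      (Matrix.fromBlocks_toBlocks M).symm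
    have hdetfb : M.det = B11.det * (B22 - B21 * ⅟B11 * B12).det := by
      rw [hMblocks] at hdetM ⊢
      exact Matrix.det_fromBlocks₁₁ _ _ _ _
    -- Schur complement is skew
    have hB21eq : B21 = -B12ᵀ := by
      ext i k
      simp [hB21, hB12, Matrix.toBlocks₂₁, Matrix.toBlocks₁₂, Matrix.transpose_apply,
        hMskew (Sum.inl k) (Sum.inr i)]
    have hB22skew : B22ᵀ = -B22 := by
      ext i k
      simp [hB22, Matrix.toBlocks₂₂, Matrix.transpose_apply,
        hMskew (Sum.inr k) (Sum.inr i)]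
    set N : Matrix (Fin 2) (Fin 2) ℚ := !![0, -c⁻¹; c⁻¹, 0] with hNdef
    have hNskew : Nᵀ = -N := by
      ext i k; fin_cases i <;> fin_cases k <;> simp [hNdef]
    have hSschur : (B22 - B21 * ⅟B11 * B12)ᵀ = -(B22 - B21 * ⅟B11 * B12) := by
      clear_value B11 B12 B21 B22
      clear_value N
      rw [hinv, hB21eq]
      rw [Matrix.transpose_sub, hB22skew, Matrix.transpose_mul, Matrix.transpose_mul,
        Matrix.transpose_neg, Matrix.transpose_transpose, hNskew]
      noncomm_ring
      simp [Matrix.mul_smul, Matrix.smul_mul, smul_smul, Matrix.mul_assoc]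
    obtain ⟨r, hr⟩ := ih m (by omega) _ hSschur
    refine ⟨c * r, ?_⟩
    have hdetB11 : B11.det = c ^ 2 := by
      rw [hB11eq, Matrix.det_fin_two_of]; ring
    rw [← hdetM, hdetfb, hdetB11, hr]; ring

theorem rat_sq_int (d : ℤ) (r : ℚ) (h : (d : ℚ) = r ^ 2) : ∃ k : ℤ, d = k ^ 2 := by
  have hint : IsIntegral ℤ r := by
    refine ⟨Polynomial.X ^ 2 - Polynomial.C d, Polynomial.monic_X_pow_sub_C d (by norm_num), ?_⟩
    rw [← Polynomial.aeval_def]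
    simp only [map_sub, map_pow, Polynomial.aeval_X, Polynomial.aeval_C,
      algebraMap_int_eq, eq_intCast, map_intCast]
    rw [← h]; ring
  obtain ⟨y, hy⟩ := IsIntegrallyClosed.isIntegral_iff.mp hint
  refine ⟨y, ?_⟩
  have : (d : ℚ) = (y : ℚ) ^ 2 := by
    rw [h, ← hy]; norm_num [algebraMap]
  exact_mod_cast this

/-- The determinant of a skew-symmetric integer matrix is a perfect square;
in particular it is congruent to `0` or `1` modulo `4`. -/
theorem det_skew_symmetric_is_square (n : ℕ) (A : Matrix (Fin n) (Fin n) ℤ)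
    (hA : Aᵀ = -A) :
    (∃ k : ℤ, A.det = k ^ 2) ∧ (A.det % 4 = 0 ∨ A.det % 4 = 1) := by
  have hmap : ((A.map (Int.cast : ℤ → ℚ))ᵀ) = -(A.map (Int.cast : ℤ → ℚ)) := by
    ext i k
    have := congrFun (congrFun hA i) k
    simp [Matrix.transpose_apply, Matrix.map_apply] at this ⊢
    exact_mod_cast this
  obtain ⟨r, hr⟩ := key_rat n (A.map (Int.cast : ℤ → ℚ)) hmap
  have hdet : ((A.det : ℚ)) = r ^ 2 := by
    rw [← hr]
    exact (RingHom.map_det (Int.castRingHom ℚ) A).symm ▸ rfl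
  obtain ⟨k, hk⟩ := rat_sq_int A.det r hdet
  refine ⟨⟨k, hk⟩, ?_⟩
  rw [hk]
  have h1 : k ^ 2 % 4 = (k % 4) ^ 2 % 4 := by
    rw [pow_two, pow_two]; exact Int.mul_emod k k 4
  have h2 : k % 4 = 0 ∨ k % 4 = 1 ∨ k % 4 = 2 ∨ k % 4 = 3 := by omega
  rcases h2 with h | h | h | h <;> rw [h1, h] <;> norm_num
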